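/- Let α, β be epsilon numbers and t an ordinal with α ≤ t < α⁺ and Ep(t) ∩ α ⊆ β. Then π(t[α := β]) = (π t)[α := β], d(π(t[α := β])) = (d π t)[α := β], and η(t[α := β]) = (η t)[α := β]. -/

import Mathlib

open Ordinal

def IsEps (x : Ordinal.{0}) : Prop := omega0 ^ x = x

noncomputable def nextEps (x : Ordinal.{0}) : Ordinal.{0} := sInf {e | IsEps e ∧ x < e}

inductive InEp : Ordinal.{0} → Ordinal.{0} → Prop
  | self (x : Ordinal.{0}) (h : omega0 ^ x = x) : InEp x x
  | exp (x e c y : Ordinal.{0}) (h : omega0 ^ x ≠ x) (hm : (e, c) ∈ CNF omega0 x)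
      (hy : InEp y e) : InEp y x

/-- The set of epsilon numbers appearing in the iterated Cantor normal form of `x`. -/
def Ep (x : Ordinal.{0}) : Set Ordinal.{0} := {y | InEp y x}

/-- Substitution of the epsilon number `α` by the epsilon number `e` in the
iterated Cantor normal form of `x`. -/
noncomputable def subst (α e : Ordinal.{0}) (x : Ordinal.{0}) : Ordinal.{0} :=
  if h : omega0 ^ x = x then (if x = α then e else x)
  else ((CNF omega0 x).attach.map (fun p => omega0 ^ (subst α e p.1.1) * p.1.2)).sum
termination_by x
decreasing_by
  have hx0 : x ≠ 0 := by
    rintro rfl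
    have := p.2
    simp [Ordinal.CNF.zero_right] at this
  have hle := Ordinal.CNF.fst_le_log p.2
  have hlt : Ordinal.log omega0 x < x := by
    have h1 : x < omega0 ^ x :=
      lt_of_le_of_ne (Ordinal.right_le_opow x one_lt_omega0) (Ne.symm h)
    exact (Ordinal.lt_opow_iff_log_lt one_lt_omega0 hx0).mp h1
  exact lt_of_le_of_lt hle hlt

/-- `π t` is the leading additively principal term of the Cantor normal form of `t`. -/
noncomputable def piOrd (t : Ordinal.{0}) : Ordinal.{0} :=
  if t = 0 then 0 else omega0 ^ (Ordinal.log omega0 t)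

/-- `d q` is the last exponent `Qₘ` of the CNF of `Q` when `q = ω^Q` is additively
principal, and `0` otherwise. -/
noncomputable def dOrd (q : Ordinal.{0}) : Ordinal.{0} :=
  if omega0 ^ (Ordinal.log omega0 q) = q then
    (((CNF omega0 (Ordinal.log omega0 q)).getLast?).map Prod.fst).getD 0
  else 0

noncomputable def etaOrd (t : Ordinal.{0}) : Ordinal.{0} := max t (piOrd t + dOrd (piOrd t))

-- basic lemmas
section Basic
variable {α β e x y : Ordinal.{0}}

theorem IsEps.pos (h : IsEps e) : 0 < e := by
  rcases eq_zero_or_pos e with rfl | h'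
  · simpa [IsEps] using h
  · exact h'

theorem IsEps.ne_zero (h : IsEps e) : e ≠ 0 := h.pos.ne'

theorem IsEps.log_eq (h : IsEps e) : Ordinal.log omega0 e = e := by
  conv_lhs => rw [← h]
  exact Ordinal.log_opow one_lt_omega0 e

theorem IsEps.CNF_eq (h : IsEps e) : CNF omega0 e = [(e, 1)] := by
  rw [Ordinal.CNF.ne_zero h.ne_zero, h.log_eq]
  rw [show omega0 ^ e = e from h, Ordinal.div_self h.ne_zero, Ordinal.mod_self,
    Ordinal.CNF.zero_right]

theorem isEps_opow_iff {L : Ordinal.{0}} : IsEps (omega0 ^ L) ↔ IsEps L := by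
  constructor
  · intro h
    exact (Ordinal.opow_right_inj one_lt_omega0).mp h
  · intro h
    unfold IsEps
    rw [show omega0 ^ L = L from h]
    exact h

theorem InEp.le (h : InEp y x) : y ≤ x := by
  induction h with
  | self x h => exact le_rfl
  | exp x e c y h hm hy ih => exact ih.trans ((Ordinal.CNF.fst_le_log hm).trans (Ordinal.log_le_self _ _))

theorem InEp.eps (h : InEp y x) : IsEps y := by
  induction h with
  | self x h => exact h
  | exp _ _ _ _ _ _ _ ih => exact ih

theorem InEp_self_iff (h : IsEps x) (h2 : InEp y x) : y = x := by
  cases h2 with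
  | self => rfl
  | exp x e c y h' hm hy => exact absurd h h'

end Basic
section Subst
variable {α β x : Ordinal.{0}}

theorem attach_map_sum (l : List (Ordinal.{0} × Ordinal.{0})) (f : Ordinal.{0} × Ordinal.{0} → Ordinal.{0}) :
    (l.attach.map (fun p => f p.1)).sum = (l.map f).sum := by
  induction l with
  | nil => simp
  | cons a l ih =>
    simp only [List.attach_cons, List.map_cons, List.map_map, List.sum_cons]
    rw [← ih]
    simp [Function.comp]

theorem subst_eps (h : IsEps x) : subst α β x = if x = α then β else x := by
  rw [subst, dif_pos (show omega0 ^ x = x from h)]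

theorem subst_zero : subst α β 0 = 0 := by
  rw [subst]
  have : ¬ (omega0 ^ (0:Ordinal.{0}) = 0) := by simp
  rw [dif_neg this, Ordinal.CNF.zero_right]
  simp

theorem subst_sum (hα : IsEps α) (hβ : IsEps β) (x : Ordinal.{0}) :
    subst α β x = ((CNF omega0 x).map (fun p => omega0 ^ (subst α β p.1) * p.2)).sum := by
  by_cases h : IsEps x
  · rw [subst_eps h, h.CNF_eq]
    simp only [List.map_cons, List.map_nil, List.sum_cons, List.sum_nil, mul_one, add_zero]
    split
    · next heq => subst heq; rw [subst_eps h, if_pos rfl]; exact hβ.symm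
    · next hne => rw [subst_eps h, if_neg hne]; exact h.symm
  · rw [subst, dif_neg (show ¬ omega0 ^ x = x from h)]
    exact attach_map_sum (CNF omega0 x) (fun q => omega0 ^ subst α β q.1 * q.2)

/-- key splitting identity -/
theorem subst_split (hα : IsEps α) (hβ : IsEps β) (hx : x ≠ 0) :
    subst α β x = omega0 ^ (subst α β (Ordinal.log omega0 x)) * (x / omega0 ^ (Ordinal.log omega0 x))
      + subst α β (x % omega0 ^ (Ordinal.log omega0 x)) := by
  rw [subst_sum hα hβ x, Ordinal.CNF.ne_zero hx, List.map_cons, List.sum_cons,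
    ← subst_sum hα hβ]

theorem subst_pos (hα : IsEps α) (hβ : IsEps β) (hx : x ≠ 0) : 0 < subst α β x := by
  rw [subst_split hα hβ hx]
  apply lt_of_lt_of_le _ (le_self_add)
  exact mul_pos (Ordinal.opow_pos _ omega0_pos) (Ordinal.div_opow_log_pos _ hx)

theorem subst_lt_alpha (hα : IsEps α) (hβ : IsEps β) : ∀ x, x < α → subst α β x = x := by
  intro x
  induction x using Ordinal.induction with
  | _ x ih =>
    intro hxα
    by_cases h : IsEps x
    · rw [subst_eps h, if_neg hxα.ne]
    · rcases eq_or_ne x 0 with rfl | hx0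
      · exact subst_zero
      · have hlog : Ordinal.log omega0 x < x := by
          have h1 : x < omega0 ^ x :=
            lt_of_le_of_ne (Ordinal.right_le_opow x one_lt_omega0) (Ne.symm h)
          exact (Ordinal.lt_opow_iff_log_lt one_lt_omega0 hx0).mp h1
        have hmod : x % omega0 ^ (Ordinal.log omega0 x) < x :=
          Ordinal.mod_opow_log_lt_self omega0 hx0
        rw [subst_split hα hβ hx0, ih _ hlog (hlog.trans hxα),
          ih _ hmod (hmod.trans hxα)]
        exact (Ordinal.div_add_mod x _).symm ▸ rfl

end Subst
section Ep
variable {α β x y : Ordinal.{0}}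

theorem InEp_cases {y r : Ordinal.{0}} (hy : InEp y r) :
    (IsEps r ∧ y = r) ∨ (¬ IsEps r ∧ ∃ e c, (e, c) ∈ CNF omega0 r ∧ InEp y e) := by
  cases hy with
  | self x h => exact Or.inl ⟨h, rfl⟩
  | exp x e c y h hm hy => exact Or.inr ⟨h, e, c, hm, hy⟩

theorem Ep_exp (h : ¬ IsEps x) {e c : Ordinal.{0}} (hm : (e, c) ∈ CNF omega0 x) :
    Ep e ⊆ Ep x := fun y hy => InEp.exp x e c y h hm hy

theorem Ep_mod_subset (h : ¬ IsEps x) (hx0 : x ≠ 0) :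
    Ep (x % omega0 ^ (Ordinal.log omega0 x)) ⊆ Ep x := by
  intro y hy
  rcases InEp_cases hy with ⟨hre, rfl⟩ | ⟨hre, e, c, hm, hy'⟩
  · refine InEp.exp x _ 1 _ h ?_ (InEp.self _ hre)
    rw [Ordinal.CNF.ne_zero hx0]
    exact List.mem_cons_of_mem _ (by rw [hre.CNF_eq]; exact List.mem_singleton.mpr rfl)
  · refine InEp.exp x e c y h ?_ hy'
    rw [Ordinal.CNF.ne_zero hx0]
    exact List.mem_cons_of_mem _ hm

theorem Ep_log_subset (h : ¬ IsEps x) (hx0 : x ≠ 0) :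
    Ep (Ordinal.log omega0 x) ⊆ Ep x := by
  apply Ep_exp h (e := Ordinal.log omega0 x) (c := x / omega0 ^ (Ordinal.log omega0 x))
  rw [Ordinal.CNF.ne_zero hx0]
  exact List.mem_cons_self

/-- everything whose epsilon subterms are `< β` is itself `< β`. -/
theorem lt_of_Ep_subset (hβ : IsEps β) : ∀ x, Ep x ⊆ Set.Iio β → x < β := by
  intro x
  induction x using Ordinal.induction with
  | _ x ih =>
    intro hEp
    by_cases h : IsEps x
    · exact hEp (InEp.self x h)
    · rcases eq_or_ne x 0 with rfl | hx0
      · exact hβ.pos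
      · have hlog : Ordinal.log omega0 x < x := by
          have h1 : x < omega0 ^ x :=
            lt_of_le_of_ne (Ordinal.right_le_opow x one_lt_omega0) (Ne.symm h)
          exact (Ordinal.lt_opow_iff_log_lt one_lt_omega0 hx0).mp h1
        have hL : Ordinal.log omega0 x < β :=
          ih _ hlog (fun y hy => hEp (Ep_log_subset h hx0 hy))
        have hmodlt : x % omega0 ^ (Ordinal.log omega0 x) < x :=
          Ordinal.mod_opow_log_lt_self omega0 hx0
        have hr : x % omega0 ^ (Ordinal.log omega0 x) < β :=
          ih _ hmodlt (fun y hy => hEp (Ep_mod_subset h hx0 hy))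
        have hβprin : ∀ a b : Ordinal.{0}, a < β → b < β → a + b < β := by
          intro a b ha hb
          have := Ordinal.principal_add_omega0_opow β (hβ ▸ ha) (hβ ▸ hb)
          rwa [show omega0 ^ β = β from hβ] at this
        have hterm : omega0 ^ (Ordinal.log omega0 x) * (x / omega0 ^ (Ordinal.log omega0 x)) < β := by
          have hc : x / omega0 ^ (Ordinal.log omega0 x) < omega0 :=
            Ordinal.div_opow_log_lt x one_lt_omega0
          calc omega0 ^ (Ordinal.log omega0 x) * (x / omega0 ^ (Ordinal.log omega0 x))
              < omega0 ^ (Ordinal.log omega0 x) * omega0 :=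
                (mul_lt_mul_iff_right₀ (Ordinal.opow_pos _ omega0_pos)).mpr hc
            _ = omega0 ^ Order.succ (Ordinal.log omega0 x) := by rw [opow_succ]
            _ ≤ omega0 ^ β := (Ordinal.opow_le_opow_iff_right one_lt_omega0).mpr
                (Order.succ_le_of_lt hL)
            _ = β := hβ
        calc x = omega0 ^ (Ordinal.log omega0 x) * (x / omega0 ^ (Ordinal.log omega0 x))
                + x % omega0 ^ (Ordinal.log omega0 x) := (Ordinal.div_add_mod x _).symm
          _ < β := hβprin _ _ hterm hr

theorem Ep_le_self (hy : y ∈ Ep x) : y ≤ x := InEp.le hy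

theorem Ep_subset_Iio_beta (hx : x < α) (h2 : Ep x ∩ Set.Iio α ⊆ Set.Iio β) :
    Ep x ⊆ Set.Iio β := fun y hy => h2 ⟨hy, lt_of_le_of_lt (Ep_le_self hy) hx⟩

end Ep

section CNFStep

/-- CNF of `ω^u * v + w` for `w < ω^u`, `0 < v < ω`. -/
theorem CNF_step {u v w : Ordinal.{0}} (hw : w < omega0 ^ u) (hv0 : 0 < v) (hv : v < omega0) :
    CNF omega0 (omega0 ^ u * v + w) = (u, v) :: CNF omega0 w := by
  have hz : omega0 ^ u * v + w ≠ 0 := by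
    apply ne_of_gt
    exact lt_of_lt_of_le (mul_pos (Ordinal.opow_pos _ omega0_pos) hv0) (le_self_add)
  have hlog : Ordinal.log omega0 (omega0 ^ u * v + w) = u := by
    rw [Ordinal.log_opow_mul_add one_lt_omega0 hv0.ne' hw,
      Ordinal.log_eq_zero hv, add_zero]
  have hdiv : (omega0 ^ u * v + w) / omega0 ^ u = v := by
    rw [Ordinal.mul_add_div _ (Ordinal.opow_ne_zero _ omega0_ne_zero),
      Ordinal.div_eq_zero_of_lt hw, add_zero]
  have hmod : (omega0 ^ u * v + w) % omega0 ^ u = w := by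
    rw [Ordinal.mul_add_mod_self, Ordinal.mod_eq_of_lt hw]
  rw [Ordinal.CNF.ne_zero hz, hlog, hdiv, hmod]

end CNFStep
section MainLemmas
variable {α β x : Ordinal.{0}}

theorem subst_alpha (hα : IsEps α) {β : Ordinal.{0}} : subst α β α = β := by
  rw [subst_eps hα, if_pos rfl]

theorem eps_in_range_eq (h : IsEps x) (h1 : α ≤ x) (h2 : x < nextEps α) : x = α := by
  rcases h1.lt_or_eq with hlt | heq
  · exact absurd (csInf_le' (show x ∈ {e | IsEps e ∧ α < e} from ⟨h, hlt⟩)) (not_le_of_gt h2)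
  · exact heq.symm

theorem alpha_le_log (hα : IsEps α) (h1 : α ≤ x) : α ≤ Ordinal.log omega0 x := by
  have h2 : omega0 ^ α < omega0 ^ Order.succ (Ordinal.log omega0 x) :=
    lt_of_le_of_lt (le_of_le_of_eq h1 rfl |>.trans_eq rfl |> fun h => hα.le.trans h)
      (Ordinal.lt_opow_succ_log_self one_lt_omega0 x)
  exact Order.lt_succ_iff.mp ((Ordinal.opow_lt_opow_iff_right one_lt_omega0).mp h2)

theorem not_eps_log_lt (h : ¬ IsEps x) (hx0 : x ≠ 0) : Ordinal.log omega0 x < x := by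
  have h1 : x < omega0 ^ x :=
    lt_of_le_of_ne (Ordinal.right_le_opow x one_lt_omega0) (Ne.symm h)
  exact (Ordinal.lt_opow_iff_log_lt one_lt_omega0 hx0).mp h1

theorem CNF_head_of_eq {a b : Ordinal.{0}} (f : Ordinal.{0} → Ordinal.{0}) (ha : a ≠ 0) (hb : b ≠ 0)
    (h : CNF omega0 b = (CNF omega0 a).map (fun p => (f p.1, p.2))) :
    Ordinal.log omega0 b = f (Ordinal.log omega0 a) ∧
    b / omega0 ^ (Ordinal.log omega0 b) = a / omega0 ^ (Ordinal.log omega0 a) := by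
  rw [Ordinal.CNF.ne_zero ha, Ordinal.CNF.ne_zero hb, List.map_cons] at h
  injection h with h1 h2
  exact ⟨congrArg Prod.fst h1, congrArg Prod.snd h1⟩

theorem EpCond_alpha (hα : IsEps α) : Ep α ∩ Set.Iio α ⊆ Set.Iio β := by
  rintro z ⟨hz1, hz2⟩
  rw [InEp_self_iff hα hz1] at hz2
  exact absurd hz2 (lt_irrefl α)

theorem CNF_map_id_of_lt (hα : IsEps α) (hβ : IsEps β) {r : Ordinal.{0}} (hrα : r < α) :
    (CNF omega0 r).map (fun p => (subst α β p.1, p.2)) = CNF omega0 r := by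
  have hc : ∀ p ∈ CNF omega0 r, (subst α β p.1, p.2) = p := by
    intro p hp
    have hfst : p.1 < α :=
      lt_of_le_of_lt ((Ordinal.CNF.fst_le_log hp).trans (Ordinal.log_le_self _ _)) hrα
    rw [subst_lt_alpha hα hβ _ hfst]
  calc (CNF omega0 r).map (fun p => (subst α β p.1, p.2))
      = (CNF omega0 r).map id := List.map_congr_left hc
    _ = CNF omega0 r := List.map_id _

end MainLemmas

theorem main_subst (α β : Ordinal.{0}) (hα : IsEps α) (hβ : IsEps β) :
    ∀ y : Ordinal.{0}, α ≤ y → y < nextEps α → Ep y ∩ Set.Iio α ⊆ Set.Iio β →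
    (CNF omega0 (subst α β y) = (CNF omega0 y).map (fun p => (subst α β p.1, p.2)) ∧
     β ≤ subst α β y ∧
     ∀ x, α ≤ x → Ep x ∩ Set.Iio α ⊆ Set.Iio β → x < y → subst α β x < subst α β y) := by
  intro y
  induction y using Ordinal.induction with
  | _ y ih =>
    intro hy1 hy2 hEp
    by_cases heps : IsEps y
    · -- y = α
      have hyα : y = α := eps_in_range_eq heps hy1 hy2
      subst hyα
      rw [subst_alpha hα]
      refine ⟨?_, le_rfl, ?_⟩
      · rw [hβ.CNF_eq, hα.CNF_eq, List.map_cons, List.map_nil, subst_alpha hα]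
      · intro x hx1 _ hxy
        exact absurd hxy (not_lt_of_ge hx1)
    · -- y not an epsilon number
      have hy0 : y ≠ 0 := (hα.pos.trans_le hy1).ne'
      have hlogy : Ordinal.log omega0 y < y := not_eps_log_lt heps hy0
      set L := Ordinal.log omega0 y with hLdef
      set c := y / omega0 ^ L with hcdef
      set r := y % omega0 ^ L with hrdef
      have hLge : α ≤ L := alpha_le_log hα hy1
      have hLlt : L < nextEps α := hlogy.trans hy2
      have hLEp : Ep L ∩ Set.Iio α ⊆ Set.Iio β :=
        fun z hz => hEp ⟨Ep_log_subset heps hy0 hz.1, hz.2⟩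
      obtain ⟨cnfL, betaL, monoL⟩ := ih L hlogy hLge hLlt hLEp
      have hr_lt : r < omega0 ^ L :=
        Ordinal.mod_lt y (Ordinal.opow_ne_zero _ omega0_ne_zero)
      have hry : r < y := lt_of_lt_of_le hr_lt (Ordinal.opow_log_le_self omega0 hy0)
      have hrEp : Ep r ∩ Set.Iio α ⊆ Set.Iio β :=
        fun z hz => hEp ⟨Ep_mod_subset heps hy0 hz.1, hz.2⟩
      have hc0 : 0 < c := Ordinal.div_opow_log_pos omega0 hy0
      have hcw : c < omega0 := Ordinal.div_opow_log_lt y one_lt_omega0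
      have hsplit : subst α β y = omega0 ^ (subst α β L) * c + subst α β r :=
        subst_split hα hβ hy0
      have hβωL : β ≤ omega0 ^ (subst α β L) := by
        calc β = omega0 ^ β := hβ.symm
          _ ≤ omega0 ^ (subst α β L) :=
            (Ordinal.opow_le_opow_iff_right one_lt_omega0).mpr betaL
      -- tail bound
      have hrb : subst α β r < omega0 ^ (subst α β L) := by
        rcases eq_or_ne r 0 with hr0 | hr0
        · rw [hr0, subst_zero]
          exact Ordinal.opow_pos _ omega0_pos
        · rcases lt_or_ge r α with hrα | hrα
          · rw [subst_lt_alpha hα hβ r hrα]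
            have : r < β := lt_of_Ep_subset hβ r (Ep_subset_Iio_beta hrα hrEp)
            exact this.trans_le hβωL
          · by_cases hre : IsEps r
            · -- r = α, then α < L
              have hrαeq : r = α := eps_in_range_eq hre hrα (hry.trans hy2)
              have hαL : α < L := by
                have : omega0 ^ α < omega0 ^ L := by
                  rw [show omega0 ^ α = α from hα]
                  exact hrαeq ▸ hr_lt
                exact (Ordinal.opow_lt_opow_iff_right one_lt_omega0).mp this
              have hβL : β < subst α β L := by
                have := monoL α le_rfl (EpCond_alpha hα) hαL
                rwa [subst_alpha hα] at this
              rw [hrαeq, subst_alpha hα]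
              exact hβL.trans_le (Ordinal.right_le_opow _ one_lt_omega0)
            · -- r not eps, use CNF structure of subst r
              obtain ⟨cnfr, betar, monor⟩ := ih r hry hrα (hry.trans hy2) hrEp
              have hsr0 : subst α β r ≠ 0 := (subst_pos hα hβ hr0).ne'
              obtain ⟨hlogr, _⟩ := CNF_head_of_eq (subst α β) hr0 hsr0 cnfr
              have hlogr_lt : Ordinal.log omega0 r < L :=
                (Ordinal.lt_opow_iff_log_lt one_lt_omega0 hr0).mp hr_lt
              have hlogr_ge : α ≤ Ordinal.log omega0 r := alpha_le_log hα hrα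
              have hlogrEp : Ep (Ordinal.log omega0 r) ∩ Set.Iio α ⊆ Set.Iio β :=
                fun z hz => hrEp ⟨Ep_log_subset hre hr0 hz.1, hz.2⟩
              have hmono : subst α β (Ordinal.log omega0 r) < subst α β L :=
                monoL _ hlogr_ge hlogrEp hlogr_lt
              calc subst α β r
                  < omega0 ^ Order.succ (Ordinal.log omega0 (subst α β r)) :=
                    Ordinal.lt_opow_succ_log_self one_lt_omega0 _
                _ = omega0 ^ Order.succ (subst α β (Ordinal.log omega0 r)) := by rw [hlogr]
                _ ≤ omega0 ^ (subst α β L) :=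
                    (Ordinal.opow_le_opow_iff_right one_lt_omega0).mpr
                      (Order.succ_le_of_lt hmono)
      -- tail CNF
      have cnfr_eq : CNF omega0 (subst α β r)
          = (CNF omega0 r).map (fun p => (subst α β p.1, p.2)) := by
        rcases eq_or_ne r 0 with hr0 | hr0
        · rw [hr0, subst_zero, Ordinal.CNF.zero_right, List.map_nil]
        · rcases lt_or_ge r α with hrα | hrα
          · rw [subst_lt_alpha hα hβ r hrα, CNF_map_id_of_lt hα hβ hrα]
          · exact (ih r hry hrα (hry.trans hy2) hrEp).1
      have hsy_cnf : CNF omega0 (subst α β y)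
          = (CNF omega0 y).map (fun p => (subst α β p.1, p.2)) := by
        rw [hsplit, CNF_step hrb hc0 hcw, cnfr_eq, Ordinal.CNF.ne_zero hy0, List.map_cons]
      have hbley : β ≤ subst α β y := by
        calc β ≤ omega0 ^ (subst α β L) := hβωL
          _ = omega0 ^ (subst α β L) * 1 := (mul_one _).symm
          _ ≤ omega0 ^ (subst α β L) * c :=
            mul_le_mul_right (Ordinal.one_le_iff_ne_zero.mpr hc0.ne') _
          _ ≤ subst α β y := hsplit ▸ le_self_add
      refine ⟨hsy_cnf, hbley, ?_⟩
      -- monotonicity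
      intro x hx1 hxEp hxy
      have hωLc_le : omega0 ^ (subst α β L) * c ≤ subst α β y := hsplit ▸ le_self_add
      have hωL_le : omega0 ^ (subst α β L) ≤ subst α β y := by
        calc omega0 ^ (subst α β L) = omega0 ^ (subst α β L) * 1 := (mul_one _).symm
          _ ≤ omega0 ^ (subst α β L) * c := mul_le_mul_right (Ordinal.one_le_iff_ne_zero.mpr hc0.ne') _
          _ ≤ subst α β y := hωLc_le
      by_cases hxeps : IsEps x
      · -- x = α
        have hxα : x = α := eps_in_range_eq hxeps hx1 (hxy.trans hy2)
        rw [hxα, subst_alpha hα]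
        rcases hLge.lt_or_eq with hαL | hαL
        · have hβL : β < subst α β L := by
            have := monoL α le_rfl (EpCond_alpha hα) hαL
            rwa [subst_alpha hα] at this
          exact lt_of_lt_of_le (hβL.trans_le (Ordinal.right_le_opow _ one_lt_omega0)) hωL_le
        · -- L = α
          have hsLβ : subst α β L = β := by rw [← hαL, subst_alpha hα]
          have hωLβ : omega0 ^ (subst α β L) = β := by
            rw [hsLβ]; exact hβ
          have hy_gt : α < y := hxα ▸ hxy
          -- either c ≥ 2 or r ≠ 0
          rcases eq_or_ne r 0 with hr0 | hr0
          · -- then c ≥ 2 since y = ω^α * c > α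
            have hc1 : 1 < c := by
              by_contra hc1
              push_neg at hc1
              have hc1' : c = 1 := le_antisymm hc1 (Ordinal.one_le_iff_ne_zero.mpr hc0.ne')
              have : y = omega0 ^ L := by
                conv_lhs => rw [← Ordinal.div_add_mod y (omega0 ^ L)]
                rw [← hcdef, ← hrdef, hc1', mul_one, hr0, add_zero]
              rw [this, ← hαL, show omega0 ^ α = α from hα] at hy_gt
              exact absurd hy_gt (lt_irrefl _)
            calc β = omega0 ^ (subst α β L) * 1 := by rw [hωLβ, mul_one]
              _ < omega0 ^ (subst α β L) * c :=
                (mul_lt_mul_iff_right₀ (Ordinal.opow_pos _ omega0_pos)).mpr hc1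
              _ ≤ subst α β y := hωLc_le
          · calc β = β + 0 := (add_zero β).symm
              _ < β + subst α β r := (add_lt_add_iff_left β).mpr (subst_pos hα hβ hr0)
              _ = omega0 ^ (subst α β L) * 1 + subst α β r := by
                  rw [hωLβ, mul_one]
              _ ≤ omega0 ^ (subst α β L) * c + subst α β r :=
                  add_le_add_left (mul_le_mul_right (Ordinal.one_le_iff_ne_zero.mpr hc0.ne') _) _
              _ = subst α β y := hsplit.symm
      · -- x not epsilon
        have hx0 : x ≠ 0 := (hα.pos.trans_le hx1).ne'
        have hlogx : Ordinal.log omega0 x < x := not_eps_log_lt hxeps hx0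
        have hLxge : α ≤ Ordinal.log omega0 x := alpha_le_log hα hx1
        have hLxEp : Ep (Ordinal.log omega0 x) ∩ Set.Iio α ⊆ Set.Iio β :=
          fun z hz => hxEp ⟨Ep_log_subset hxeps hx0 hz.1, hz.2⟩
        have hLxL : Ordinal.log omega0 x ≤ L := Ordinal.log_mono_right omega0 hxy.le
        obtain ⟨cnfx, betax, _⟩ := ih x hxy hx1 (hxy.trans hy2) hxEp
        have hsx0 : subst α β x ≠ 0 := (subst_pos hα hβ hx0).ne'
        obtain ⟨hlogsx, hdivsx⟩ := CNF_head_of_eq (subst α β) hx0 hsx0 cnfx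
        rcases hLxL.lt_or_eq with hLxlt | hLxeq
        · -- log x < L
          have hmono : subst α β (Ordinal.log omega0 x) < subst α β L :=
            monoL _ hLxge hLxEp hLxlt
          calc subst α β x
              < omega0 ^ Order.succ (Ordinal.log omega0 (subst α β x)) :=
                Ordinal.lt_opow_succ_log_self one_lt_omega0 _
            _ = omega0 ^ Order.succ (subst α β (Ordinal.log omega0 x)) := by rw [hlogsx]
            _ ≤ omega0 ^ (subst α β L) :=
                (Ordinal.opow_le_opow_iff_right one_lt_omega0).mpr (Order.succ_le_of_lt hmono)
            _ ≤ subst α β y := hωL_le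
        · -- log x = L
          set cx := x / omega0 ^ (Ordinal.log omega0 x) with hcxdef
          set rx := x % omega0 ^ (Ordinal.log omega0 x) with hrxdef
          have hcxc : cx ≤ c := by
            rw [hcxdef, hLxeq]
            apply (Ordinal.div_le (Ordinal.opow_ne_zero _ omega0_ne_zero)).mpr
            calc x < y := hxy
              _ = omega0 ^ L * c + r := (Ordinal.div_add_mod y _).symm
              _ < omega0 ^ L * c + omega0 ^ L := (add_lt_add_iff_left _).mpr hr_lt
              _ = omega0 ^ L * Order.succ c := by rw [mul_succ]
          have hsplitx : subst α β x = omega0 ^ (subst α β L) * cx + subst α β rx := by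
            rw [subst_split hα hβ hx0, ← hLxeq]
          rcases hcxc.lt_or_eq with hcxlt | hcxeq
          · -- cx < c
            have h1 : subst α β x < omega0 ^ (subst α β L) * Order.succ cx := by
              have := Ordinal.lt_mul_succ_div (subst α β x)
                (Ordinal.opow_ne_zero (subst α β L) omega0_ne_zero)
              rwa [show subst α β x / omega0 ^ (subst α β L) = cx by
                rw [← hLxeq, ← hlogsx]; exact hdivsx] at this
            calc subst α β x < omega0 ^ (subst α β L) * Order.succ cx := h1
              _ ≤ omega0 ^ (subst α β L) * c :=
                mul_le_mul_right (Order.succ_le_of_lt hcxlt) _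
              _ ≤ subst α β y := hωLc_le
          · -- cx = c, compare remainders
            have hrxr : rx < r := by
              have h1 : omega0 ^ L * c + rx < omega0 ^ L * c + r := by
                calc omega0 ^ L * c + rx = x := by
                      rw [hrxdef, ← hcxeq, hcxdef, hLxeq]
                      exact hLxeq ▸ Ordinal.div_add_mod x _
                  _ < y := hxy
                  _ = omega0 ^ L * c + r := (Ordinal.div_add_mod y _).symm
              exact (add_lt_add_iff_left _).mp h1
            have hrxEp : Ep rx ∩ Set.Iio α ⊆ Set.Iio β :=
              fun z hz => hxEp ⟨Ep_mod_subset hxeps hx0 hz.1, hz.2⟩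
            have hsub_rx_r : subst α β rx < subst α β r := by
              rcases lt_or_ge r α with hrα | hrα
              · have hrxα : rx < α := hrxr.trans hrα
                rw [subst_lt_alpha hα hβ r hrα, subst_lt_alpha hα hβ rx hrxα]
                exact hrxr
              · obtain ⟨_, betar, monor⟩ := ih r hry hrα (hry.trans hy2) hrEp
                rcases lt_or_ge rx α with hrxα | hrxα
                · rw [subst_lt_alpha hα hβ rx hrxα]
                  have : rx < β := lt_of_Ep_subset hβ rx (Ep_subset_Iio_beta hrxα hrxEp)
                  exact this.trans_le betar
                · exact monor rx hrxα hrxEp hrxr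
            calc subst α β x = omega0 ^ (subst α β L) * c + subst α β rx := by
                  rw [hsplitx, hcxeq]
              _ < omega0 ^ (subst α β L) * c + subst α β r :=
                  (add_lt_add_iff_left _).mpr hsub_rx_r
              _ = subst α β y := hsplit.symm
section Corollaries
variable {α β : Ordinal.{0}}

theorem subst_lt_general (hα : IsEps α) (hβ : IsEps β) {x y : Ordinal.{0}}
    (hy2 : y < nextEps α) (hyEp : Ep y ∩ Set.Iio α ⊆ Set.Iio β)
    (hxEp : Ep x ∩ Set.Iio α ⊆ Set.Iio β) (hxy : x < y) :
    subst α β x < subst α β y := by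
  rcases lt_or_ge y α with hyα | hyα
  · rw [subst_lt_alpha hα hβ x (hxy.trans hyα), subst_lt_alpha hα hβ y hyα]
    exact hxy
  · obtain ⟨_, betay, monoy⟩ := main_subst α β hα hβ y hyα hy2 hyEp
    rcases lt_or_ge x α with hxα | hxα
    · rw [subst_lt_alpha hα hβ x hxα]
      exact (lt_of_Ep_subset hβ x (Ep_subset_Iio_beta hxα hxEp)).trans_le betay
    · exact monoy x hxα hxEp hxy

theorem subst_le_general (hα : IsEps α) (hβ : IsEps β) {x y : Ordinal.{0}}
    (hy2 : y < nextEps α) (hyEp : Ep y ∩ Set.Iio α ⊆ Set.Iio β)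
    (hxEp : Ep x ∩ Set.Iio α ⊆ Set.Iio β) (hxy : x ≤ y) :
    subst α β x ≤ subst α β y := by
  rcases hxy.lt_or_eq with h | h
  · exact (subst_lt_general hα hβ hy2 hyEp hxEp h).le
  · rw [h]

theorem piOrd_eps {e : Ordinal.{0}} (he : IsEps e) : piOrd e = e := by
  rw [piOrd, if_neg he.ne_zero, he.log_eq]
  exact he

theorem dOrd_eps {e : Ordinal.{0}} (he : IsEps e) : dOrd e = e := by
  rw [dOrd, he.log_eq, if_pos (show omega0 ^ e = e from he), he.CNF_eq]
  rfl

theorem dOrd_opow (X : Ordinal.{0}) :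
    dOrd (omega0 ^ X) = (((CNF omega0 X).getLast?).map Prod.fst).getD 0 := by
  rw [dOrd, Ordinal.log_opow one_lt_omega0, if_pos rfl]

theorem mul_two_ord (a : Ordinal.{0}) : a * 2 = a + a := by
  rw [show (2 : Ordinal.{0}) = 1 + 1 from by norm_num, mul_add, mul_one]

theorem subst_double (hα : IsEps α) (hβ : IsEps β) : subst α β (α + α) = β + β := by
  have h2 : α + α = omega0 ^ α * 2 + 0 := by
    rw [add_zero, show omega0 ^ α = α from hα, mul_two_ord]
  have h2ω : (2 : Ordinal.{0}) < omega0 := by exact_mod_cast Ordinal.nat_lt_omega0 2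
  have hstep : CNF omega0 (omega0 ^ α * 2 + 0) = (α, 2) :: CNF omega0 0 :=
    CNF_step (Ordinal.opow_pos _ omega0_pos) zero_lt_two h2ω
  rw [h2, subst_sum hα hβ, hstep, Ordinal.CNF.zero_right, List.map_cons, List.map_nil,
    List.sum_cons, List.sum_nil, add_zero, subst_alpha hα,
    show omega0 ^ β = β from hβ]
  show β * 2 = β + β
  exact mul_two_ord β

end Corollaries

/-- The substitution t ↦ t[α := β] commutes with π, d∘π and η. -/
theorem pi_eta_subst (α β t : Ordinal.{0}) (hα : IsEps α) (hβ : IsEps β)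
    (ht1 : α ≤ t) (ht2 : t < nextEps α) (hEp : Ep t ∩ Set.Iio α ⊆ Set.Iio β) :
    piOrd (subst α β t) = subst α β (piOrd t) ∧
    dOrd (piOrd (subst α β t)) = subst α β (dOrd (piOrd t)) ∧
    etaOrd (subst α β t) = subst α β (etaOrd t) := by
  have ht0 : t ≠ 0 := (hα.pos.trans_le ht1).ne'
  by_cases heps : IsEps t
  · -- t = α
    have htα : t = α := eps_in_range_eq heps ht1 ht2
    refine ⟨?_, ?_, ?_⟩
    · rw [htα, subst_alpha hα, piOrd_eps hβ, piOrd_eps hα, subst_alpha hα]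
    · rw [htα, subst_alpha hα, piOrd_eps hβ, piOrd_eps hα, dOrd_eps hβ, dOrd_eps hα,
        subst_alpha hα]
    · rw [htα, subst_alpha hα, etaOrd, etaOrd, piOrd_eps hβ, piOrd_eps hα,
        dOrd_eps hβ, dOrd_eps hα, max_eq_right (le_self_add : β ≤ β + β),
        max_eq_right (le_self_add : α ≤ α + α), subst_double hα hβ]
  · -- t not an epsilon number
    have hlogt : Ordinal.log omega0 t < t := not_eps_log_lt heps ht0
    set L := Ordinal.log omega0 t with hLdef
    set c := t / omega0 ^ L with hcdef
    set r := t % omega0 ^ L with hrdef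
    have hLge : α ≤ L := alpha_le_log hα ht1
    have hLlt : L < nextEps α := hlogt.trans ht2
    have hL0 : L ≠ 0 := (hα.pos.trans_le hLge).ne'
    have hLEp : Ep L ∩ Set.Iio α ⊆ Set.Iio β :=
      fun z hz => hEp ⟨Ep_log_subset heps ht0 hz.1, hz.2⟩
    have hrEp : Ep r ∩ Set.Iio α ⊆ Set.Iio β :=
      fun z hz => hEp ⟨Ep_mod_subset heps ht0 hz.1, hz.2⟩
    have hr_lt : r < omega0 ^ L := Ordinal.mod_lt t (Ordinal.opow_ne_zero _ omega0_ne_zero)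
    have hrt : r < t := lt_of_lt_of_le hr_lt (Ordinal.opow_log_le_self omega0 ht0)
    have hc0 : 0 < c := Ordinal.div_opow_log_pos omega0 ht0
    obtain ⟨cnft, betat, _⟩ := main_subst α β hα hβ t ht1 ht2 hEp
    obtain ⟨cnfL, betaL, monoL⟩ := main_subst α β hα hβ L hLge hLlt hLEp
    have hst0 : subst α β t ≠ 0 := (subst_pos hα hβ ht0).ne'
    obtain ⟨hlogst, _⟩ := CNF_head_of_eq (subst α β) ht0 hst0 cnft
    have hsplit : subst α β t = omega0 ^ (subst α β L) * c + subst α β r :=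
      subst_split hα hβ ht0
    -- piOrd computations
    have hπt : piOrd t = omega0 ^ L := by rw [piOrd, if_neg ht0]
    have hπst : piOrd (subst α β t) = omega0 ^ (subst α β L) := by
      rw [piOrd, if_neg hst0, hlogst]
    have hsωL : subst α β (omega0 ^ L) = omega0 ^ (subst α β L) := by
      have h1 : (omega0 : Ordinal.{0}) ^ L ≠ 0 := Ordinal.opow_ne_zero _ omega0_ne_zero
      rw [subst_split hα hβ h1, Ordinal.log_opow one_lt_omega0, Ordinal.div_self h1,
        Ordinal.mod_self, subst_zero, add_zero, mul_one]
    have part1 : piOrd (subst α β t) = subst α β (piOrd t) := by rw [hπst, hπt, hsωL]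
    -- the last exponent of the CNF of L
    have hCNFLne : CNF omega0 L ≠ [] := by
      rw [Ordinal.CNF.ne_zero hL0]
      simp
    set p := (CNF omega0 L).getLast hCNFLne with hpdef
    have hgetL : (CNF omega0 L).getLast? = some p := List.getLast?_eq_getLast hCNFLne
    have hpmem : p ∈ CNF omega0 L := List.getLast_mem hCNFLne
    have hpmem' : (p.1, p.2) ∈ CNF omega0 L := by simpa using hpmem
    have hELlog : p.1 ≤ Ordinal.log omega0 L := Ordinal.CNF.fst_le_log hpmem
    have hEL : p.1 ≤ L := hELlog.trans (Ordinal.log_le_self _ _)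
    have hE_lt_next : p.1 < nextEps α := lt_of_le_of_lt hEL hLlt
    have hp1α_of_eps : IsEps L → p.1 = α := by
      intro hLeps
      have hLα : L = α := eps_in_range_eq hLeps hLge hLlt
      have h1 := hgetL
      rw [hLeps.CNF_eq] at h1
      simp only [List.getLast?_singleton, Option.some.injEq] at h1
      rw [← h1, hLα]
    have hEEp : Ep p.1 ∩ Set.Iio α ⊆ Set.Iio β := by
      by_cases hLeps : IsEps L
      · rw [hp1α_of_eps hLeps]
        exact EpCond_alpha hα
      · exact fun z hz => hLEp ⟨Ep_exp hLeps hpmem' hz.1, hz.2⟩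
    have hσE_le : subst α β p.1 ≤ omega0 ^ (subst α β L) := by
      by_cases hLeps : IsEps L
      · have hLα : L = α := eps_in_range_eq hLeps hLge hLlt
        rw [hp1α_of_eps hLeps, hLα, subst_alpha hα, show omega0 ^ β = β from hβ]
      · have hE_lt_L : p.1 < L := lt_of_le_of_lt hELlog (not_eps_log_lt hLeps hL0)
        exact (subst_lt_general hα hβ hLlt hLEp hEEp hE_lt_L).le.trans
          (Ordinal.right_le_opow _ one_lt_omega0)
    -- dOrd computations
    have hdπt : dOrd (piOrd t) = p.1 := by
      rw [hπt, dOrd_opow, hgetL]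
      rfl
    have hdπst : dOrd (piOrd (subst α β t)) = subst α β p.1 := by
      rw [hπst, dOrd_opow, cnfL,
        show (List.map (fun q => (subst α β q.1, q.2)) (CNF omega0 L)).getLast?
            = ((CNF omega0 L).getLast?).map (fun q => (subst α β q.1, q.2)) from
          List.getLast?_map, hgetL]
      rfl
    have part2 : dOrd (piOrd (subst α β t)) = subst α β (dOrd (piOrd t)) := by
      rw [hdπst, hdπt]
    -- eta
    have ht_eq : c = 1 → t = omega0 ^ L + r := by
      intro h
      conv_lhs => rw [← Ordinal.div_add_mod t (omega0 ^ L)]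
      rw [← hcdef, ← hrdef, h, mul_one]
    have part3 : etaOrd (subst α β t) = subst α β (etaOrd t) := by
      rw [etaOrd, etaOrd, hdπst, hdπt, hπst, hπt]
      rcases le_or_gt (omega0 ^ L + p.1) t with hge | hlt
      · -- η t = t
        have hkey : omega0 ^ (subst α β L) + subst α β p.1 ≤ subst α β t := by
          rcases (Ordinal.one_le_iff_ne_zero.mpr hc0.ne').lt_or_eq with h1c | h1c
          · -- 1 < c
            have h2c : (2 : Ordinal.{0}) ≤ c := by
              have := Order.succ_le_of_lt h1c
              rwa [show Order.succ (1 : Ordinal.{0}) = 2 from by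
                rw [Order.succ_eq_add_one]; norm_num] at this
            calc omega0 ^ (subst α β L) + subst α β p.1
                ≤ omega0 ^ (subst α β L) + omega0 ^ (subst α β L) :=
                  add_le_add_right hσE_le _
              _ = omega0 ^ (subst α β L) * 2 := (mul_two_ord _).symm
              _ ≤ omega0 ^ (subst α β L) * c := mul_le_mul_right h2c _
              _ ≤ subst α β t := hsplit ▸ le_self_add
          · -- c = 1
            have hc1 : c = 1 := h1c.symm
            have hEr : p.1 ≤ r := by
              have h3 := hge
              rw [ht_eq hc1] at h3
              exact (add_le_add_iff_left _).mp h3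
            have hsEr : subst α β p.1 ≤ subst α β r :=
              subst_le_general hα hβ (hrt.trans ht2) hrEp hEEp hEr
            calc omega0 ^ (subst α β L) + subst α β p.1
                ≤ omega0 ^ (subst α β L) + subst α β r := add_le_add_right hsEr _
              _ = subst α β t := by rw [hsplit, hc1, mul_one]
        rw [max_eq_left hge, max_eq_left hkey]
      · -- η t = ω^L + E
        have hc1 : c = 1 := by
          have hcle : c ≤ 1 := by
            apply (Ordinal.div_le (Ordinal.opow_ne_zero _ omega0_ne_zero)).mpr
            calc t < omega0 ^ L + p.1 := hlt
              _ ≤ omega0 ^ L + omega0 ^ L :=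
                add_le_add_right (hEL.trans (Ordinal.right_le_opow _ one_lt_omega0)) _
              _ = omega0 ^ L * Order.succ 1 := by rw [mul_succ, mul_one]
          exact le_antisymm hcle (Ordinal.one_le_iff_ne_zero.mpr hc0.ne')
        have hrE : r < p.1 := by
          have h3 := hlt
          rw [ht_eq hc1] at h3
          exact (add_lt_add_iff_left _).mp h3
        have hsum : subst α β (omega0 ^ L + p.1)
            = omega0 ^ (subst α β L) + subst α β p.1 := by
          rcases lt_or_eq_of_le (hEL.trans (Ordinal.right_le_opow L one_lt_omega0)) with hEω | hEω
          · have hstep := CNF_step (u := L) (v := 1) (w := p.1) hEω zero_lt_one one_lt_omega0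
            rw [mul_one] at hstep
            rw [subst_sum hα hβ, hstep, List.map_cons, List.sum_cons, mul_one,
              ← subst_sum hα hβ]
          · -- p.1 = ω^L forces L = α and p.1 = α
            have hLeps : IsEps L :=
              le_antisymm (hEω.symm.trans_le hEL) (Ordinal.right_le_opow L one_lt_omega0)
            have hLα : L = α := eps_in_range_eq hLeps hLge hLlt
            rw [hp1α_of_eps hLeps, hLα, show omega0 ^ α = α from hα, subst_alpha hα,
              show omega0 ^ β = β from hβ, subst_double hα hβ]
        have hsub_le : subst α β t ≤ omega0 ^ (subst α β L) + subst α β p.1 := by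
          have hsrE : subst α β r ≤ subst α β p.1 :=
            subst_le_general hα hβ hE_lt_next hEEp hrEp hrE.le
          calc subst α β t = omega0 ^ (subst α β L) * 1 + subst α β r := by
                rw [hsplit, hc1]
            _ = omega0 ^ (subst α β L) + subst α β r := by rw [mul_one]
            _ ≤ _ := add_le_add_right hsrE _
        rw [max_eq_right hlt.le, max_eq_right hsub_le, hsum]
    exact ⟨part1, part2, part3⟩
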